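/- Let P ⊆ ℝⁿ be a Delone set of finite local complexity. There exists ε with 0 < ε < 1 such that for every differentiable function φ : ℝⁿ → ℝⁿ whose derivative map dφ is strongly P-equivariant and which satisfies sup_{x ∈ ℝⁿ} ‖Dφ(x) − I‖ < ε, the map φ is a bijection of ℝⁿ, its inverse φ⁻¹ is differentiable, and the derivative map d(φ⁻¹) is strongly φ(P)-equivariant, i.e. there exists R' > 0 such that for all u, v ∈ ℝⁿ, B_{R'}[φ(P) − u] = B_{R'}[φ(P) − v] implies D(φ⁻¹)(u) = D(φ⁻¹)(v). -/

import Mathlib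

open Metric Set

noncomputable section

/-- Euclidean space ℝⁿ. -/
abbrev Euc (n : ℕ) := EuclideanSpace ℝ (Fin n)

/-- The translate `P - x = {p - x : p ∈ P}`. -/
def shiftSet {n : ℕ} (P : Set (Euc n)) (x : Euc n) : Set (Euc n) :=
  (fun p => p - x) '' P

/-- The `r`-patch of `P` around `x`: `B_r[P - x] = B(0,r) ∩ (P - x)`. -/
def patch {n : ℕ} (P : Set (Euc n)) (r : ℝ) (x : Euc n) : Set (Euc n) :=
  ball (0 : Euc n) r ∩ shiftSet P x

/-- `P` is uniformly discrete: there is a positive minimal distance between points. -/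
def UnifDiscrete {n : ℕ} (P : Set (Euc n)) : Prop :=
  ∃ δ > 0, ∀ p ∈ P, ∀ q ∈ P, p ≠ q → δ ≤ ‖p - q‖

/-- `P` is relatively dense: every ball of radius `R` contains a point of `P`. -/
def RelDense {n : ℕ} (P : Set (Euc n)) : Prop :=
  ∃ R > 0, ∀ x : Euc n, ∃ p ∈ P, ‖p - x‖ < R

/-- `P` has finite local complexity: for each `r > 0`, only finitely many `r`-patches
around points of `P`. -/
def FLC {n : ℕ} (P : Set (Euc n)) : Prop :=
  ∀ r > 0, {s : Set (Euc n) | ∃ x ∈ P, s = patch P r x}.Finite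

/-- `f` is `P`-equivariant with range `R`. -/
def EquivRange {n : ℕ} {F : Type*} (P : Set (Euc n)) (R : ℝ) (f : Euc n → F) : Prop :=
  ∀ x y : Euc n, patch P R x = patch P R y → f x = f y

/-- `f` is strongly `P`-equivariant: `P`-equivariant with some finite range `R > 0`. -/
def StrongEquiv {n : ℕ} {F : Type*} (P : Set (Euc n)) (f : Euc n → F) : Prop :=
  ∃ R > 0, EquivRange P R f

/-- `f`, viewed as a function on the subset `Q`, is `P`-equivariant with range `R`. -/
def EquivRangeOn {n : ℕ} {F : Type*} (P Q : Set (Euc n)) (R : ℝ) (f : Euc n → F) : Prop :=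
  ∀ x ∈ Q, ∀ y ∈ Q, patch P R x = patch P R y → f x = f y

/-- `f`, viewed as a function on the subset `Q`, is strongly `P`-equivariant. -/
def StrongEquivOn {n : ℕ} {F : Type*} (P Q : Set (Euc n)) (f : Euc n → F) : Prop :=
  ∃ R > 0, EquivRangeOn P Q R f

/-- `Q` is locally derivable from `P`. -/
def LocallyDerivable {n : ℕ} (P Q : Set (Euc n)) : Prop :=
  ∃ R > 0, ∀ x y : Euc n, patch P R x = patch P R y →
    ({0} : Set (Euc n)) ∩ shiftSet Q x = ({0} : Set (Euc n)) ∩ shiftSet Q y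

/-- Hypothesis (H): for every `r > 0` there is `r' > 0` such that for all `x`,
`B(φ(x), r) ∩ φ(P) ⊆ φ(B(x, r') ∩ P)`. -/
def HypoH {n : ℕ} (P : Set (Euc n)) (φ : Euc n → Euc n) : Prop :=
  ∀ r > 0, ∃ r' > 0, ∀ x : Euc n, ball (φ x) r ∩ (φ '' P) ⊆ φ '' (ball x r' ∩ P)

/-- The pattern metric `D` on closed subsets of ℝⁿ. -/
def patternDist {n : ℕ} (A B : Set (Euc n)) : ℝ :=
  sInf {ε : ℝ | 0 < ε ∧ Metric.hausdorffDist
    ((ball (0 : Euc n) (1 / ε) ∩ A) ∪ sphere (0 : Euc n) (1 / ε))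
    ((ball (0 : Euc n) (1 / ε) ∩ B) ∪ sphere (0 : Euc n) (1 / ε)) ≤ ε}

/-- A continuous `f : ℝⁿ → ℝⁿ` is weakly `P`-equivariant if it is uniformly approximated
by strongly `P`-equivariant continuous functions. -/
def WeakEquiv {n : ℕ} (P : Set (Euc n)) (f : Euc n → Euc n) : Prop :=
  ∀ ε > 0, ∃ g : Euc n → Euc n, Continuous g ∧ StrongEquiv P g ∧ ∀ x : Euc n, ‖f x - g x‖ < ε

/-- `P` is aperiodic: the only translation fixing `P` is `0`. -/
def IsAperiodicSet {n : ℕ} (P : Set (Euc n)) : Prop :=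
  ∀ x : Euc n, shiftSet P x = P → x = 0


lemma mem_patch' {n : ℕ} {P : Set (Euc n)} {r : ℝ} {x s : Euc n} :
    s ∈ patch P r x ↔ ‖s‖ < r ∧ ∃ p ∈ P, p - x = s := by
  simp [patch, shiftSet, mem_ball_zero_iff]

lemma finite_inter_bounded {n : ℕ} {P : Set (Euc n)} (hUD : UnifDiscrete P)
    (K : Set (Euc n)) (hK : Bornology.IsBounded K) : (K ∩ P).Finite := by
  obtain ⟨δ, hδ, hsep⟩ := hUD
  have hclosed : IsClosed P := by
    apply isClosed_of_closure_subset
    intro z hz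
    obtain ⟨p, hp, hpz⟩ := Metric.mem_closure_iff.1 hz (δ/2) (by linarith)
    rcases eq_or_ne z p with rfl | hne
    · exact hp
    · exfalso
      have hdzp : 0 < dist z p := dist_pos.2 hne
      obtain ⟨q, hq, hqz⟩ := Metric.mem_closure_iff.1 hz (min (δ/2) (dist z p))
        (lt_min (by linarith) hdzp)
      have hqp : q ≠ p := by
        rintro rfl
        exact absurd (lt_of_lt_of_le hqz (min_le_right _ _)) (lt_irrefl _)
      have h1 : δ ≤ ‖p - q‖ := hsep p hp q hq (Ne.symm hqp)
      have h2 : dist z q < δ/2 := lt_of_lt_of_le hqz (min_le_left _ _)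
      have h3 : dist p q ≤ dist p z + dist z q := dist_triangle _ _ _
      rw [← dist_eq_norm] at h1
      rw [dist_comm z p] at hpz
      linarith
  have hdisc : DiscreteTopology ↥P := by
    rw [discreteTopology_subtype_iff]
    intro p hp
    have hU : ball p δ ∩ {p}ᶜ ∈ nhdsWithin p {p}ᶜ := mem_nhdsWithin_iff.2 ⟨δ, hδ, Set.Subset.rfl⟩
    have hmem := Filter.inter_mem_inf hU (Filter.mem_principal_self P)
    have hempty : (ball p δ ∩ {p}ᶜ) ∩ P = ∅ := by
      apply Set.eq_empty_iff_forall_notMem.2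
      rintro q ⟨⟨hq1, hq3⟩, hq2⟩
      have := hsep q hq2 p hp hq3
      rw [← dist_eq_norm] at this
      rw [mem_ball] at hq1
      exact absurd hq1 (not_lt.2 this)
    rw [← Filter.empty_mem_iff_bot]
    rwa [hempty] at hmem
  exact Metric.finite_isBounded_inter_isClosed (isDiscrete_iff_discreteTopology.2 hdisc) hK hclosed

lemma delta_finite {n : ℕ} {P : Set (Euc n)} (hUD : UnifDiscrete P) (hFLC : FLC P)
    {L : ℝ} (hL : 0 < L) :
    {d : Euc n | ‖d‖ < L ∧ ∃ p ∈ P, ∃ q ∈ P, p - q = d}.Finite := by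
  have hpat := hFLC L hL
  have hmem : ∀ x, x ∈ P → (patch P L x).Finite := by
    intro x _
    have hsub : patch P L x ⊆ (fun p => p - x) '' (ball x L ∩ P) := by
      intro s hs
      rw [mem_patch'] at hs
      obtain ⟨hn, p, hp, rfl⟩ := hs
      exact ⟨p, ⟨by rwa [mem_ball, dist_eq_norm], hp⟩, rfl⟩
    exact ((finite_inter_bounded hUD _ isBounded_ball).image _).subset hsub
  refine Set.Finite.subset (Set.Finite.sUnion hpat ?_) ?_
  · rintro t ⟨x, hx, rfl⟩
    exact hmem x hx
  · rintro d ⟨hn, p, hp, q, hq, rfl⟩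
    exact Set.mem_sUnion.2 ⟨patch P L q, ⟨q, hq, rfl⟩, mem_patch'.2 ⟨hn, p, hp, rfl⟩⟩


set_option maxHeartbeats 1000000 in
theorem stmt18 {n : ℕ} (P : Set (Euc n))
    (hUD : UnifDiscrete P) (hRD : RelDense P) (hFLC : FLC P) :
    ∃ ε : ℝ, 0 < ε ∧ ε < 1 ∧
      ∀ φ : Euc n → Euc n, Differentiable ℝ φ →
      StrongEquiv P (fderiv ℝ φ) →
      (∀ x : Euc n, ‖fderiv ℝ φ x - ContinuousLinearMap.id ℝ (Euc n)‖ < ε) →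
      Function.Bijective φ ∧ Differentiable ℝ (Function.invFun φ) ∧
        ∃ R' > 0, ∀ u v : Euc n, patch (φ '' P) R' u = patch (φ '' P) R' v →
          fderiv ℝ (Function.invFun φ) u = fderiv ℝ (Function.invFun φ) v := by
  classical
  obtain ⟨Rd, hRd, hRDd⟩ := hRD
  set L : ℝ := 4 * Rd with hLdef
  have hL : 0 < L := by rw [hLdef]; linarith
  set Δs : Set (Euc n) := {d : Euc n | ‖d‖ < 2*L ∧ ∃ p ∈ P, ∃ q ∈ P, p - q = d} with hΔdef
  have hΔfin : Δs.Finite := delta_finite hUD hFLC (by linarith)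
  set T : Finset ℝ := ((hΔfin.toFinset ×ˢ hΔfin.toFinset).image
    (fun ab => ‖ab.1 - ab.2‖)).filter (fun r => 0 < r) with hTdef
  set γ : ℝ := if h : T.Nonempty then min 1 (T.min' h) else 1 with hγdef
  have hγpos : 0 < γ := by
    rw [hγdef]
    have hTpos : ∀ r ∈ T, 0 < r := by
      intro r hr
      rw [hTdef] at hr
      exact (Finset.mem_filter.1 hr).2
    split_ifs with h
    · exact lt_min one_pos (hTpos _ (T.min'_mem h))
    · norm_num
  have hγsep : ∀ a b : Euc n, a ∈ Δs → b ∈ Δs → a ≠ b → γ ≤ ‖a - b‖ := by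
    intro a b ha hb hne
    have hmemT : ‖a - b‖ ∈ T := by
      rw [hTdef]
      refine Finset.mem_filter.2 ⟨Finset.mem_image.2 ⟨(a, b), ?_, rfl⟩, ?_⟩
      · exact Finset.mem_product.2 ⟨hΔfin.mem_toFinset.2 ha, hΔfin.mem_toFinset.2 hb⟩
      · exact norm_pos_iff.2 (sub_ne_zero.2 hne)
    have hTne : T.Nonempty := ⟨_, hmemT⟩
    rw [hγdef, dif_pos hTne]
    exact le_trans (min_le_right _ _) (T.min'_le _ hmemT)
  set ε : ℝ := min (1/8 : ℝ) (γ / (8*L + 8)) with hεdef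
  have hεpos : 0 < ε := by
    rw [hεdef]
    apply lt_min (by norm_num)
    positivity
  have hε8 : ε ≤ 1/8 := min_le_left _ _
  have hε1 : ε < 1 := lt_of_le_of_lt hε8 (by norm_num)
  have hεγ : ε * (8*L + 8) ≤ γ := by
    have h2 : ε ≤ γ / (8*L + 8) := min_le_right _ _
    rw [le_div_iff₀ (by linarith)] at h2
    exact h2
  refine ⟨ε, hεpos, hε1, ?_⟩
  intro φ hφdiff hSE hφε
  obtain ⟨R, hRpos, hEqv⟩ := hSE
  -- key inequality
  have hKI : ∀ a b : Euc n, ‖φ a - φ b - (a - b)‖ ≤ ε * ‖a - b‖ := by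
    intro a b
    have hg : ∀ x : Euc n, DifferentiableAt ℝ (fun z : Euc n => φ z - z) x :=
      fun x => (hφdiff x).sub differentiableAt_fun_id
    have hbound : ∀ x ∈ (Set.univ : Set (Euc n)),
        ‖fderiv ℝ (fun z : Euc n => φ z - z) x‖ ≤ ε := by
      intro x _
      rw [fderiv_fun_sub (hφdiff x) differentiableAt_fun_id, fderiv_fun_id]
      exact le_of_lt (hφε x)
    have hmv := Convex.norm_image_sub_le_of_norm_fderiv_le (fun x _ => hg x) hbound
      convex_univ (mem_univ b) (mem_univ a)
    calc ‖φ a - φ b - (a - b)‖ = ‖(φ a - a) - (φ b - b)‖ := by congr 1; abel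
    _ ≤ ε * ‖a - b‖ := hmv
  have hup : ∀ a b : Euc n, ‖φ a - φ b‖ ≤ (1+ε) * ‖a - b‖ := by
    intro a b
    have h := hKI a b
    have h2 : ‖φ a - φ b‖ ≤ ‖φ a - φ b - (a - b)‖ + ‖a - b‖ := by
      calc ‖φ a - φ b‖ = ‖(φ a - φ b - (a - b)) + (a - b)‖ := by congr 1; abel
      _ ≤ _ := norm_add_le _ _
    nlinarith [norm_nonneg (a - b)]
  have hup2 : ∀ a b : Euc n, ‖φ a - φ b‖ ≤ 2 * ‖a - b‖ := by
    intro a b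
    have := hup a b
    nlinarith [norm_nonneg (a - b)]
  have hlow : ∀ a b : Euc n, (1-ε) * ‖a - b‖ ≤ ‖φ a - φ b‖ := by
    intro a b
    have h := hKI a b
    have h2 : ‖a - b‖ ≤ ‖φ a - φ b - (a - b)‖ + ‖φ a - φ b‖ := by
      calc ‖a - b‖ = ‖(φ a - φ b) - (φ a - φ b - (a - b))‖ := by congr 1; abel
      _ ≤ ‖φ a - φ b‖ + ‖φ a - φ b - (a - b)‖ := norm_sub_le _ _
      _ = _ := by ring
    nlinarith [norm_nonneg (a - b)]
  have hinj : Function.Injective φ := by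
    intro a b hab
    have h1 := hlow a b
    rw [hab, sub_self, norm_zero] at h1
    have h2 : ‖a - b‖ = 0 := by nlinarith [norm_nonneg (a - b)]
    exact sub_eq_zero.1 (norm_eq_zero.1 h2)
  have hεnn : ((ε.toNNReal : NNReal) : ℝ) = ε := Real.coe_toNNReal ε hεpos.le
  have hsurj : Function.Surjective φ := by
    intro w
    have hlip : LipschitzWith ε.toNNReal (fun z : Euc n => w + z - φ z) := by
      apply LipschitzWith.of_dist_le_mul
      intro a b
      rw [dist_eq_norm, dist_eq_norm, hεnn]
      have h := hKI a b
      calc ‖(w + a - φ a) - (w + b - φ b)‖ = ‖φ a - φ b - (a - b)‖ := by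
            rw [← norm_neg]; congr 1; abel
      _ ≤ ε * ‖a - b‖ := h
    have hcontr : ContractingWith ε.toNNReal (fun z : Euc n => w + z - φ z) := by
      refine ⟨?_, hlip⟩
      have : ((ε.toNNReal : NNReal) : ℝ) < 1 := by rw [hεnn]; exact hε1
      exact_mod_cast this
    refine ⟨ContractingWith.fixedPoint _ hcontr, ?_⟩
    have hz : w + (ContractingWith.fixedPoint _ hcontr) -
        φ (ContractingWith.fixedPoint _ hcontr) = ContractingWith.fixedPoint _ hcontr :=
      hcontr.fixedPoint_isFixedPt
    set z := ContractingWith.fixedPoint _ hcontr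
    calc φ z = w + z - (w + z - φ z) := by abel
    _ = w + z - z := by rw [hz]
    _ = w := by abel
  set ψ := Function.invFun φ with hψdef
  have hRI : ∀ w : Euc n, φ (ψ w) = w := Function.rightInverse_invFun hsurj
  have hψcont : Continuous ψ := by
    have : LipschitzWith 2 ψ := by
      apply LipschitzWith.of_dist_le_mul
      intro a b
      have h := hlow (ψ a) (ψ b)
      rw [hRI a, hRI b] at h
      rw [dist_eq_norm, dist_eq_norm]
      have e1 : (7:ℝ)/8 * ‖ψ a - ψ b‖ ≤ (1-ε) * ‖ψ a - ψ b‖ :=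
        mul_le_mul_of_nonneg_right (by linarith) (norm_nonneg _)
      push_cast
      linarith [norm_nonneg (a - b)]
    exact this.continuous
  -- invertible derivatives
  have hDinv : ∀ w : Euc n, ∃ E : Euc n ≃L[ℝ] Euc n,
      (E : Euc n →L[ℝ] Euc n) = fderiv ℝ φ w := by
    intro w
    have h1 : ‖(1 : Euc n →L[ℝ] Euc n) - fderiv ℝ φ w‖ < 1 := by
      rw [norm_sub_rev]
      have := hφε w
      rw [ContinuousLinearMap.one_def]
      exact lt_trans this hε1
    refine ⟨ContinuousLinearEquiv.unitsEquiv ℝ (Euc n) (Units.oneSub _ h1), ?_⟩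
    ext zz
    rw [ContinuousLinearEquiv.coe_coe, ContinuousLinearEquiv.unitsEquiv_apply]
    rw [Units.val_oneSub, sub_sub_cancel]
  have hψfd : ∀ w : Euc n, HasFDerivAt ψ
      (((hDinv (ψ w)).choose.symm : Euc n ≃L[ℝ] Euc n) : Euc n →L[ℝ] Euc n) w := by
    intro w
    apply HasFDerivAt.of_local_left_inverse hψcont.continuousAt
    · rw [(hDinv (ψ w)).choose_spec]
      exact (hφdiff (ψ w)).hasFDerivAt
    · exact Filter.Eventually.of_forall hRI
  have hψdiff : Differentiable ℝ ψ := fun w => (hψfd w).differentiableAt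
  -- constants
  set ρ₁ : ℝ := R + Rd + 1 with hρ₁def
  set ρ : ℝ := ρ₁ + 3*Rd + 1 with hρdef
  set R' : ℝ := 2*ρ + 10*Rd + 1 with hR'def
  have hρ₁pos : 0 < ρ₁ := by rw [hρ₁def]; linarith
  have hρpos : 0 < ρ := by rw [hρdef]; linarith
  have hR'pos : 0 < R' := by rw [hR'def]; linarith
  refine ⟨⟨hinj, hsurj⟩, hψdiff, R', hR'pos, ?_⟩
  intro u v hpt
  -- matching
  have hmatch : ∀ u' v' : Euc n, patch (φ '' P) R' u' = patch (φ '' P) R' v' →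
      ∀ a ∈ P, ‖φ a - u'‖ < R' → ∃ b ∈ P, φ b = v' + (φ a - u') := by
    intro u' v' hpt' a ha hnorm
    have hmem : φ a - u' ∈ patch (φ '' P) R' u' :=
      mem_patch'.2 ⟨hnorm, φ a, ⟨a, ha, rfl⟩, rfl⟩
    rw [hpt'] at hmem
    obtain ⟨_, w, ⟨b, hb, rfl⟩, heq⟩ := mem_patch'.1 hmem
    exact ⟨b, hb, by rw [← heq]; abel⟩
  -- key rigidity lemma
  have lemM : ∀ (u' v' p₁ p₂ q₁ q₂ : Euc n), p₁ ∈ P → p₂ ∈ P → q₁ ∈ P → q₂ ∈ P →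
      φ q₁ = v' + (φ p₁ - u') → φ q₂ = v' + (φ p₂ - u') → ‖p₁ - p₂‖ ≤ L →
      p₁ - p₂ = q₁ - q₂ := by
    intro u' v' p₁ p₂ q₁ q₂ hp₁ hp₂ hq₁ hq₂ h₁ h₂ hpp
    have key : φ q₁ - φ q₂ = φ p₁ - φ p₂ := by rw [h₁, h₂]; abel
    have h3 := hlow q₁ q₂
    rw [key] at h3
    have h4 := hup p₁ p₂
    have hq12 : ‖q₁ - q₂‖ < 2 * L := by
      have e1 : (7:ℝ)/8 * ‖q₁ - q₂‖ ≤ (1-ε) * ‖q₁ - q₂‖ :=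
        mul_le_mul_of_nonneg_right (by linarith) (norm_nonneg _)
      have e2 : (1+ε) * ‖p₁ - p₂‖ ≤ (9:ℝ)/8 * L := by
        have := norm_nonneg (p₁ - p₂)
        nlinarith
      linarith
    have t1 := hKI p₁ p₂
    have t2 := hKI q₁ q₂
    rw [key] at t2
    have hdd : ‖(p₁ - p₂) - (q₁ - q₂)‖ ≤ ε * (‖p₁ - p₂‖ + ‖q₁ - q₂‖) := by
      calc ‖(p₁ - p₂) - (q₁ - q₂)‖
          = ‖(φ p₁ - φ p₂ - (q₁ - q₂)) - (φ p₁ - φ p₂ - (p₁ - p₂))‖ := by congr 1; abel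
      _ ≤ ‖φ p₁ - φ p₂ - (q₁ - q₂)‖ + ‖φ p₁ - φ p₂ - (p₁ - p₂)‖ := norm_sub_le _ _
      _ ≤ ε * ‖q₁ - q₂‖ + ε * ‖p₁ - p₂‖ := add_le_add t2 t1
      _ = ε * (‖p₁ - p₂‖ + ‖q₁ - q₂‖) := by ring
    by_contra hne2
    have hmem1 : (p₁ - p₂) ∈ Δs := ⟨lt_of_le_of_lt hpp (by linarith), p₁, hp₁, p₂, hp₂, rfl⟩
    have hmem2 : (q₁ - q₂) ∈ Δs := ⟨hq12, q₁, hq₁, q₂, hq₂, rfl⟩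
    have hγle := hγsep _ _ hmem1 hmem2 hne2
    have h5 : ε * (‖p₁ - p₂‖ + ‖q₁ - q₂‖) ≤ ε * (3*L) :=
      mul_le_mul_of_nonneg_left (by linarith) hεpos.le
    have h6 : ε * (3*L) < ε * (8*L + 8) := by
      apply mul_lt_mul_of_pos_left (by linarith) hεpos
    linarith
  
  -- chain lemma
  have chain : ∀ (u' v' x' p₀ q₀ : Euc n), φ x' = u' → p₀ ∈ P → q₀ ∈ P →
      ‖p₀ - x'‖ < 2*Rd → φ q₀ = v' + (φ p₀ - u') →
      (∀ a ∈ P, ‖φ a - u'‖ < R' → ∃ b ∈ P, φ b = v' + (φ a - u')) →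
      ∀ k : ℕ, Rd * k ≤ ρ + 3*Rd → ∀ p ∈ P, ‖p - p₀‖ ≤ Rd * k →
      ∀ q ∈ P, φ q = v' + (φ p - u') → q - p = q₀ - p₀ := by
    intro u' v' x' p₀ q₀ hx' hp₀ hq₀ hbase hm₀ hmt k
    induction k with
    | zero =>
      intro _ p hp hpd q hq hm
      have hpp₀ : p = p₀ := by
        have h0 : ‖p - p₀‖ ≤ 0 := by simpa using hpd
        have h1 : ‖p - p₀‖ = 0 := le_antisymm h0 (norm_nonneg _)
        exact sub_eq_zero.1 (norm_eq_zero.1 h1)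
      subst hpp₀
      have hqq : q = q₀ := hinj (by rw [hm, hm₀])
      rw [hqq]
    | succ m IH =>
      intro hcap p hp hpd q hq hm
      push_cast at hpd hcap
      by_cases h1 : ‖p - p₀‖ ≤ Rd * m
      · exact IH (by push_cast; linarith) p hp (by push_cast; exact h1) q hq hm
      push_neg at h1
      by_cases h2 : ‖p - p₀‖ ≤ Rd
      · have hM := lemM u' v' p p₀ q q₀ hp hp₀ hq hq₀ hm hm₀
          (le_trans h2 (by rw [hLdef]; linarith))
        calc q - p = (q - q₀) - (p - p₀) + (q₀ - p₀) := by abel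
        _ = (p - p₀) - (p - p₀) + (q₀ - p₀) := by rw [hM]
        _ = q₀ - p₀ := by abel
      push_neg at h2
      rcases Nat.eq_zero_or_pos m with rfl | hm1
      · exfalso
        norm_num at hpd
        linarith
      have hm1' : (1:ℝ) ≤ (m:ℝ) := by exact_mod_cast hm1
      set d := p - p₀ with hddef
      have hnd : 0 < ‖d‖ := lt_trans hRd h2
      set t : ℝ := (Rd * ((m:ℝ) - 1)) / ‖d‖ with htdef
      have ht0 : 0 ≤ t := by
        apply div_nonneg _ (norm_nonneg _)
        nlinarith
      have ht1 : t * ‖d‖ = Rd * ((m:ℝ) - 1) := div_mul_cancel₀ _ (ne_of_gt hnd)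
      have htm : Rd * ((m:ℝ) - 1) ≤ Rd * (m:ℝ) := by nlinarith
      have htlt : t < 1 := by
        rw [htdef, div_lt_one hnd]
        linarith
      set z := p₀ + t • d with hzdef
      obtain ⟨a, ha, haz⟩ := hRDd z
      have hzp₀ : ‖z - p₀‖ = Rd * ((m:ℝ) - 1) := by
        rw [hzdef, add_sub_cancel_left, norm_smul, Real.norm_eq_abs, abs_of_nonneg ht0, ht1]
      have hap₀ : ‖a - p₀‖ ≤ Rd * m := by
        calc ‖a - p₀‖ = ‖(a - z) + (z - p₀)‖ := by congr 1; abel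
        _ ≤ ‖a - z‖ + ‖z - p₀‖ := norm_add_le _ _
        _ ≤ Rd + Rd * ((m:ℝ) - 1) := by rw [hzp₀]; linarith [haz]
        _ = Rd * m := by ring
      have hz2 : z - p = (t - 1) • d := by
        rw [hzdef, sub_smul, one_smul, hddef]
        abel
      have hzp : ‖z - p‖ ≤ 2 * Rd := by
        rw [hz2, norm_smul, Real.norm_eq_abs, abs_of_nonpos (by linarith)]
        have he : -(t - 1) * ‖d‖ = ‖d‖ - Rd*((m:ℝ)-1) := by
          have : -(t-1) * ‖d‖ = ‖d‖ - t * ‖d‖ := by ring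
          rw [this, ht1]
        rw [he]
        linarith
      have hap : ‖a - p‖ ≤ 3 * Rd := by
        calc ‖a - p‖ = ‖(a - z) + (z - p)‖ := by congr 1; abel
        _ ≤ ‖a - z‖ + ‖z - p‖ := norm_add_le _ _
        _ ≤ Rd + 2*Rd := by linarith [haz]
        _ = 3 * Rd := by ring
      have hnorma : ‖φ a - u'‖ < R' := by
        have hax : ‖a - x'‖ ≤ ρ + 5*Rd := by
          calc ‖a - x'‖ = ‖(a - p₀) + (p₀ - x')‖ := by congr 1; abel
          _ ≤ ‖a - p₀‖ + ‖p₀ - x'‖ := norm_add_le _ _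
          _ ≤ ρ + 5*Rd := by linarith
        have h := hup2 a x'
        rw [hx'] at h
        linarith
      obtain ⟨b, hb, hmb⟩ := hmt a ha hnorma
      have hIH := IH (by push_cast; linarith) a ha (by push_cast; linarith) b hb hmb
      have hM := lemM u' v' p a q b hp ha hq hb hm hmb (by
        rw [hLdef]
        calc ‖p - a‖ = ‖a - p‖ := by rw [norm_sub_rev]
        _ ≤ 3*Rd := hap
        _ ≤ 4*Rd := by linarith)
      calc q - p = (q - b) - (p - a) + (b - a) := by abel
      _ = (p - a) - (p - a) + (b - a) := by rw [hM]
      _ = b - a := by abel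
      _ = q₀ - p₀ := hIH
  -- set up matched base pair
  set x := ψ u with hxdef
  set y := ψ v with hydef
  have hxu : φ x = u := hRI u
  have hyv : φ y = v := hRI v
  obtain ⟨p₀, hp₀, hp₀x⟩ := hRDd x
  have hmu := hmatch u v hpt
  have hmv' := hmatch v u hpt.symm
  have hφp₀u : ‖φ p₀ - u‖ < R' := by
    have h := hup2 p₀ x
    rw [hxu] at h
    linarith
  obtain ⟨q₀, hq₀, hm₀⟩ := hmu p₀ hp₀ hφp₀u
  have hq₀y : ‖q₀ - y‖ < 2*Rd := by
    have h3 := hlow q₀ y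
    have hfq : φ q₀ - φ y = φ p₀ - u := by rw [hm₀, hyv]; abel
    rw [hfq] at h3
    have h4 := hup p₀ x
    rw [hxu] at h4
    have e1 : (7:ℝ)/8 * ‖q₀ - y‖ ≤ (1-ε) * ‖q₀ - y‖ :=
      mul_le_mul_of_nonneg_right (by linarith) (norm_nonneg _)
    have e2 : (1+ε) * ‖p₀ - x‖ ≤ (9:ℝ)/8 * Rd := by nlinarith [norm_nonneg (p₀ - x)]
    linarith
  have hm₀' : φ p₀ = u + (φ q₀ - v) := by rw [hm₀]; abel
  have chainF := chain u v x p₀ q₀ hxu hp₀ hq₀ (by linarith) hm₀ hmu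
  have chainR := chain v u y q₀ p₀ hyv hq₀ hp₀ hq₀y hm₀' hmv'
  set k : ℕ := ⌈(ρ + 2*Rd)/Rd⌉₊ with hkdef
  have hk1 : ρ + 2*Rd ≤ Rd * k := by
    have h := Nat.le_ceil ((ρ + 2*Rd)/Rd)
    rw [← hkdef] at h
    have h2 := mul_le_mul_of_nonneg_left h hRd.le
    rw [mul_comm Rd ((ρ + 2*Rd)/Rd), div_mul_cancel₀ _ (ne_of_gt hRd)] at h2
    linarith
  have hk2 : Rd * k ≤ ρ + 3*Rd := by
    have h := Nat.ceil_lt_add_one (show (0:ℝ) ≤ (ρ + 2*Rd)/Rd by positivity)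
    rw [← hkdef] at h
    have h2 := mul_le_mul_of_nonneg_left h.le hRd.le
    rw [mul_add, mul_comm Rd ((ρ + 2*Rd)/Rd), div_mul_cancel₀ _ (ne_of_gt hRd), mul_one] at h2
    linarith
  have hA : ∀ p ∈ P, ‖p - p₀‖ ≤ ρ + 2*Rd → ∀ q ∈ P, φ q = v + (φ p - u) →
      q - p = q₀ - p₀ := fun p hp hpd q hq hm => chainF k hk2 p hp (hpd.trans hk1) q hq hm
  have hA' : ∀ q ∈ P, ‖q - q₀‖ ≤ ρ + 2*Rd → ∀ p ∈ P, φ p = u + (φ q - v) →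
      p - q = p₀ - q₀ := fun q hq hqd p hp hm => chainR k hk2 q hq (hqd.trans hk1) p hp hm
  -- patch equality at ρ₁
  have happ : patch P ρ₁ x = patch P ρ₁ (x + (q₀ - p₀)) := by
    ext s
    rw [mem_patch', mem_patch']
    constructor
    · rintro ⟨hns, p, hpP, rfl⟩
      have hpu : ‖φ p - u‖ < R' := by
        have h := hup2 p x
        rw [hxu] at h
        linarith
      obtain ⟨q, hqP, hmq⟩ := hmu p hpP hpu
      have hqp := hA p hpP (by
        have hrev : ‖x - p₀‖ = ‖p₀ - x‖ := norm_sub_rev _ _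
        calc ‖p - p₀‖ = ‖(p - x) + (x - p₀)‖ := by congr 1; abel
        _ ≤ ‖p - x‖ + ‖x - p₀‖ := norm_add_le _ _
        _ ≤ ρ + 2*Rd := by rw [hrev]; linarith) q hqP hmq
      refine ⟨hns, p + (q₀ - p₀), ?_, by abel⟩
      have hqeq : q = p + (q₀ - p₀) := by
        calc q = p + (q - p) := by abel
        _ = p + (q₀ - p₀) := by rw [hqp]
      rw [← hqeq]
      exact hqP
    · rintro ⟨hns, qq, hqqP, heq⟩
      have hqqy : ‖qq - y‖ < ρ := by
        calc ‖qq - y‖ = ‖(qq - (x + (q₀ - p₀))) + ((q₀ - y) - (p₀ - x))‖ := by congr 1; abel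
        _ ≤ ‖qq - (x + (q₀ - p₀))‖ + ‖(q₀ - y) - (p₀ - x)‖ := norm_add_le _ _
        _ ≤ ‖qq - (x + (q₀ - p₀))‖ + (‖q₀ - y‖ + ‖p₀ - x‖) := by
              linarith [norm_sub_le (q₀ - y) (p₀ - x)]
        _ < ρ₁ + (2*Rd + Rd) := by rw [heq]; linarith
        _ ≤ ρ := by linarith
      have hqv : ‖φ qq - v‖ < R' := by
        have h := hup2 qq y
        rw [hyv] at h
        linarith
      obtain ⟨pp, hppP, hmpp⟩ := hmv' qq hqqP hqv
      have hpq := hA' qq hqqP (by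
        have hrev : ‖y - q₀‖ = ‖q₀ - y‖ := norm_sub_rev _ _
        calc ‖qq - q₀‖ = ‖(qq - y) + (y - q₀)‖ := by congr 1; abel
        _ ≤ ‖qq - y‖ + ‖y - q₀‖ := norm_add_le _ _
        _ ≤ ρ + 2*Rd := by rw [hrev]; linarith) pp hppP hmpp
      refine ⟨hns, pp, hppP, ?_⟩
      calc pp - x = (pp - qq) - (p₀ - q₀) + (qq - (x + (q₀ - p₀))) := by abel
      _ = (p₀ - q₀) - (p₀ - q₀) + (qq - (x + (q₀ - p₀))) := by rw [hpq]
      _ = qq - (x + (q₀ - p₀)) := by abel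
      _ = s := heq
  -- derivative shift
  have hshiftD : ∀ z : Euc n, ‖z‖ < ρ₁ - R →
      fderiv ℝ φ (x + z) = fderiv ℝ φ (x + (q₀ - p₀) + z) := by
    intro z hz
    apply hEqv
    have hsub : ∀ (a b : Euc n), patch P ρ₁ a = patch P ρ₁ b →
        patch P R (a + z) ⊆ patch P R (b + z) := by
      intro a b hab s hs
      rw [mem_patch'] at hs ⊢
      obtain ⟨hns, p, hpP, hps⟩ := hs
      have hpa : p - a ∈ patch P ρ₁ a := by
        refine mem_patch'.2 ⟨?_, p, hpP, rfl⟩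
        calc ‖p - a‖ = ‖(p - (a + z)) + z‖ := by congr 1; abel
        _ ≤ ‖p - (a + z)‖ + ‖z‖ := norm_add_le _ _
        _ < R + (ρ₁ - R) := by rw [hps]; exact add_lt_add hns hz
        _ = ρ₁ := by ring
      rw [hab] at hpa
      obtain ⟨_, q, hqP, hqb⟩ := mem_patch'.1 hpa
      refine ⟨hns, q, hqP, ?_⟩
      calc q - (b + z) = (q - b) - z := by abel
      _ = (p - a) - z := by rw [hqb]
      _ = p - (a + z) := by abel
      _ = s := hps
    exact Set.Subset.antisymm (hsub _ _ happ) (hsub _ _ happ.symm)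
  have hρ₁R : (0:ℝ) < ρ₁ - R := by rw [hρ₁def]; linarith
  -- constancy of φ (x+z) - φ (x+w+z)
  have hconst : φ (x + (p₀ - x)) - φ (x + (q₀ - p₀) + (p₀ - x))
      = φ (x + 0) - φ (x + (q₀ - p₀) + 0) := by
    have hball : Convex ℝ (ball (0:Euc n) (ρ₁ - R)) := convex_ball _ _
    have hder : ∀ z ∈ ball (0:Euc n) (ρ₁ - R),
        HasFDerivWithinAt (fun z : Euc n => φ (x + z) - φ (x + (q₀ - p₀) + z))
          ((0 : Euc n →L[ℝ] Euc n)) (ball (0:Euc n) (ρ₁ - R)) z := by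
      intro z hz
      have h1 : HasFDerivAt (fun z : Euc n => φ (x + z))
          ((fderiv ℝ φ (x + z)).comp (ContinuousLinearMap.id ℝ (Euc n))) z :=
        (hφdiff (x + z)).hasFDerivAt.comp z ((hasFDerivAt_id z).const_add x)
      have h2 : HasFDerivAt (fun z : Euc n => φ (x + (q₀ - p₀) + z))
          ((fderiv ℝ φ (x + (q₀ - p₀) + z)).comp (ContinuousLinearMap.id ℝ (Euc n))) z :=
        (hφdiff (x + (q₀ - p₀) + z)).hasFDerivAt.comp z
          ((hasFDerivAt_id z).const_add (x + (q₀ - p₀)))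
      have h3 := h1.sub h2
      have h0 : (fderiv ℝ φ (x + z)).comp (ContinuousLinearMap.id ℝ (Euc n)) -
          (fderiv ℝ φ (x + (q₀ - p₀) + z)).comp (ContinuousLinearMap.id ℝ (Euc n)) = 0 := by
        rw [ContinuousLinearMap.comp_id, ContinuousLinearMap.comp_id,
          hshiftD z (mem_ball_zero_iff.1 hz), sub_self]
      rw [h0] at h3
      exact h3.hasFDerivWithinAt
    have h0mem : (0:Euc n) ∈ ball (0:Euc n) (ρ₁ - R) := mem_ball_self hρ₁R
    have hpmem : (p₀ - x) ∈ ball (0:Euc n) (ρ₁ - R) := by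
      rw [mem_ball_zero_iff]
      have : ρ₁ - R = Rd + 1 := by rw [hρ₁def]; ring
      linarith
    have h4 := hball.norm_image_sub_le_of_norm_hasFDerivWithin_le (C := 0) hder
      (fun z _ => le_of_eq norm_zero) h0mem hpmem
    rw [zero_mul] at h4
    exact sub_eq_zero.1 (norm_eq_zero.1 (le_antisymm h4 (norm_nonneg _)))
  have hxqy : x + (q₀ - p₀) = y := by
    apply hinj
    rw [hyv]
    have e1 : x + (p₀ - x) = p₀ := by abel
    have e2 : x + (q₀ - p₀) + (p₀ - x) = q₀ := by abel
    rw [e1, e2, add_zero, add_zero] at hconst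
    have e3 : φ p₀ - φ q₀ = u - v := by rw [hm₀]; abel
    rw [e3, hxu] at hconst
    exact (sub_right_inj.1 hconst).symm
  have hDeq : fderiv ℝ φ x = fderiv ℝ φ y := by
    have h := hshiftD 0 (by rw [norm_zero]; exact hρ₁R)
    rw [add_zero, add_zero, hxqy] at h
    exact h
  have hEu := (hψfd u).fderiv
  have hEv := (hψfd v).fderiv
  rw [hEu, hEv]
  have hEeq : (hDinv (ψ u)).choose = (hDinv (ψ v)).choose := by
    have h1 : ((hDinv (ψ u)).choose : Euc n →L[ℝ] Euc n) = fderiv ℝ φ x := by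
      rw [(hDinv (ψ u)).choose_spec, hxdef]
    have h2 : ((hDinv (ψ v)).choose : Euc n →L[ℝ] Euc n) = fderiv ℝ φ y := by
      rw [(hDinv (ψ v)).choose_spec, hydef]
    refine ContinuousLinearEquiv.ext (funext fun z => ?_)
    calc (hDinv (ψ u)).choose z = ((hDinv (ψ u)).choose : Euc n →L[ℝ] Euc n) z := rfl
    _ = fderiv ℝ φ x z := by rw [h1]
    _ = fderiv ℝ φ y z := by rw [hDeq]
    _ = ((hDinv (ψ v)).choose : Euc n →L[ℝ] Euc n) z := by rw [h2]
    _ = (hDinv (ψ v)).choose z := rfl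
  rw [hEeq]
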